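/- Let (f_ε)_{ε>0} be a family of functions f_ε:ℝⁿ→ℝⁿ, each globally Lipschitz continuous with the same constant L>0, such that f_ε(z)→f(z) as ε↓0 for every z∈ℝⁿ. For (a_ε,ℓ_ε),(a,ℓ)∈L^∞(0,T;ℝ^{n×n})×L^∞(0,T;ℝⁿ) with (a_ε,ℓ_ε)→(a,ℓ) in L^∞(0,T;ℝ^{n×n}×ℝⁿ) as ε↓0, let y_ε∈C([0,T];ℝⁿ) be the unique solution of y_ε(t)=y₀+∫₀ᵗ ((t−s)^{γ−1}/Γ(γ)) f_ε(a_ε(s)y_ε(s)+ℓ_ε(s)) ds, t∈[0,T], and let y=S(a,ℓ). Then ‖y_ε−y‖_{C([0,T];ℝⁿ)}→0 as ε↓0. -/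

import Mathlib

open MeasureTheory Set Filter Topology

noncomputable section

/-- `ℝⁿ` with the Euclidean norm. -/
abbrev Vec (n : ℕ) := EuclideanSpace ℝ (Fin n)

/-- `ℝ^{n×n}` with the Frobenius (Euclidean) norm. -/
abbrev Mat (n : ℕ) := EuclideanSpace ℝ ((Fin n) × (Fin n))

/-- Matrix-vector multiplication `A * x`. -/
def mv {n : ℕ} (A : Mat n) (x : Vec n) : Vec n :=
  (WithLp.equiv 2 (Fin n → ℝ)).symm (fun i => ∑ j, A (i, j) * x j)

/-- `y ∈ C([0,T];ℝⁿ)` is a mild solution of the state equation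
`∂^γ y = f(a y + ℓ)`, `y(0) = y₀`, i.e. it satisfies the Volterra integral equation
`y(t) = y₀ + ∫₀ᵗ ((t-s)^(γ-1)/Γ(γ)) f(a(s) y(s) + ℓ(s)) ds` for all `t ∈ [0,T]`. -/
def IsMildSolution {n : ℕ} (γ T : ℝ) (y₀ : Vec n) (f : Vec n → Vec n)
    (a : ℝ → Mat n) (ℓ : ℝ → Vec n) (y : ℝ → Vec n) : Prop :=
  ContinuousOn y (Icc 0 T) ∧
  ∀ t ∈ Icc (0:ℝ) T,
    y t = y₀ + ∫ s in (0:ℝ)..t, ((t - s) ^ (γ - 1) / Real.Gamma γ) • f (mv (a s) (y s) + ℓ s)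

namespace Stmt18Aux
open intervalIntegral

lemma mv_sub_sub {n : ℕ} (A B : Mat n) (x z : Vec n) :
    mv A x - mv B z = mv A (x - z) + mv (A - B) z := by
  ext i
  simp only [mv, WithLp.equiv_symm_apply, PiLp.toLp_apply, PiLp.add_apply, PiLp.sub_apply]
  rw [← Finset.sum_add_distrib, ← Finset.sum_sub_distrib]
  congr 1; ext j; ring

lemma norm_mv_le {n : ℕ} (A : Mat n) (x : Vec n) : ‖mv A x‖ ≤ ‖A‖ * ‖x‖ := by
  have hA : 0 ≤ ‖A‖ * ‖x‖ := by positivity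
  rw [← Real.sqrt_sq hA, EuclideanSpace.norm_eq]
  apply Real.sqrt_le_sqrt
  have key : ∀ i, ‖mv A x i‖^2 ≤ (∑ j, A (i,j)^2) * ∑ j, (x j)^2 := by
    intro i
    simpa [mv, WithLp.equiv, Real.norm_eq_abs, sq_abs] using
      Finset.sum_mul_sq_le_sq_mul_sq Finset.univ (fun j => A (i,j)) (fun j => x j)
  calc ∑ i, ‖mv A x i‖^2 ≤ ∑ i, (∑ j, A (i,j)^2) * ∑ j, (x j)^2 :=
        Finset.sum_le_sum fun i _ => key i
    _ = (∑ i, ∑ j, A (i,j)^2) * ∑ j, (x j)^2 := by rw [Finset.sum_mul]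
    _ = (‖A‖*‖x‖)^2 := by
        rw [mul_pow, EuclideanSpace.norm_eq, EuclideanSpace.norm_eq,
          Real.sq_sqrt (by positivity), Real.sq_sqrt (by positivity),
          ← Fintype.sum_prod_type']
        simp only [Real.norm_eq_abs, sq_abs]

lemma continuous_mv {n : ℕ} : Continuous (fun p : Mat n × Vec n => mv p.1 p.2) := by
  have h1 : Continuous fun p : Mat n × Vec n => (fun i => ∑ j, p.1 (i, j) * p.2 j : Fin n → ℝ) := by
    apply continuous_pi
    intro i
    apply continuous_finset_sum
    intro j _
    exact ((EuclideanSpace.proj (𝕜 := ℝ) (i, j)).continuous.comp continuous_fst).mul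
      ((EuclideanSpace.proj (𝕜 := ℝ) j).continuous.comp continuous_snd)
  exact (PiLp.continuous_toLp 2 (fun _ : Fin n => ℝ)).comp h1

lemma lipschitz_continuous {n : ℕ} {L : ℝ} (hL : 0 ≤ L) {g : Vec n → Vec n}
    (h : ∀ z₁ z₂ : Vec n, ‖g z₁ - g z₂‖ ≤ L * ‖z₁ - z₂‖) : Continuous g := by
  have : LipschitzWith (Real.toNNReal L) g := by
    apply LipschitzWith.of_dist_le_mul
    intro x y
    rw [dist_eq_norm, dist_eq_norm, Real.coe_toNNReal L hL]
    exact h x y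
  exact this.continuous

lemma kernelII {r : ℝ} (hr : -1 < r) (t : ℝ) :
    IntervalIntegrable (fun s => (t - s) ^ r) volume 0 t := by
  have := ((intervalIntegrable_rpow' (a := 0) (b := t) hr).comp_sub_left t).symm
  simpa using this

lemma kernel_mul_contOn {r t : ℝ} (hr : -1 < r) (ht : 0 ≤ t) {w : ℝ → ℝ}
    (hw : ContinuousOn w (Icc 0 t)) :
    IntervalIntegrable (fun s => (t - s) ^ r * w s) volume 0 t :=
  (kernelII hr t).mul_continuousOn (by rwa [uIcc_of_le ht])

lemma kernel_integral {r t : ℝ} (hr : -1 < r) (_ht : 0 ≤ t) :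
    ∫ s in (0:ℝ)..t, (t - s) ^ r = t ^ (r + 1) / (r + 1) := by
  rw [intervalIntegral.integral_comp_sub_left (fun u => u ^ r) t]
  simp [integral_rpow (Or.inl hr), Real.zero_rpow (by linarith : r + 1 ≠ 0)]

lemma exp_kernel_integrable {r t lam : ℝ} (hr : -1 < r) :
    IntervalIntegrable (fun u => u ^ r * Real.exp (-(lam * u))) volume 0 t :=
  (intervalIntegrable_rpow' hr).mul_continuousOn (Continuous.continuousOn (by continuity))

lemma integrand_integrable {n : ℕ} {γ T t : ℝ} (hγ : γ ∈ Ioo (0:ℝ) 1) (ht : t ∈ Icc (0:ℝ) T)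
    {g : Vec n → Vec n} (hg : Continuous g)
    {a : ℝ → Mat n} {ℓ : ℝ → Vec n} (ha : Measurable a) (hl : Measurable ℓ)
    {y : ℝ → Vec n} (hy : ContinuousOn y (Icc 0 T))
    {Cg : ℝ} (hCg : ∀ s ∈ Icc (0:ℝ) T, ‖g (mv (a s) (y s) + ℓ s)‖ ≤ Cg) :
    IntervalIntegrable (fun s => ((t - s) ^ (γ-1) / Real.Gamma γ) • g (mv (a s) (y s) + ℓ s))
      volume 0 t := by
  have hr : -1 < γ - 1 := by linarith [hγ.1]
  have hΓ : 0 < Real.Gamma γ := Real.Gamma_pos_of_pos hγ.1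
  have hsub : Ioc (0:ℝ) t ⊆ Icc 0 T := fun s hs => ⟨hs.1.le, hs.2.trans ht.2⟩
  have hle : volume.restrict (Ioc (0:ℝ) t) ≤ volume.restrict (Icc (0:ℝ) T) :=
    Measure.restrict_mono hsub le_rfl
  rw [intervalIntegrable_iff_integrableOn_Ioc_of_le ht.1]
  have hym : AEStronglyMeasurable y (volume.restrict (Ioc (0:ℝ) t)) :=
    (hy.aestronglyMeasurable measurableSet_Icc).mono_measure hle
  have hvec : AEStronglyMeasurable (fun s => g (mv (a s) (y s) + ℓ s))
      (volume.restrict (Ioc (0:ℝ) t)) :=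
    hg.comp_aestronglyMeasurable
      (((continuous_mv.comp_aestronglyMeasurable
        (ha.aestronglyMeasurable.prodMk hym))).add hl.aestronglyMeasurable)
  have hker : AEStronglyMeasurable (fun s => (t - s) ^ (γ-1) / Real.Gamma γ)
      (volume.restrict (Ioc (0:ℝ) t)) :=
    (((measurable_const.sub measurable_id).pow_const _).div_const _).aestronglyMeasurable
  have hdom : IntervalIntegrable (fun s => ((t - s) ^ (γ-1) / Real.Gamma γ) * Cg) volume 0 t :=
    ((kernelII hr t).div_const _).mul_const _
  apply Integrable.mono' ((intervalIntegrable_iff_integrableOn_Ioc_of_le ht.1).1 hdom)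
    (hker.smul hvec)
  rw [ae_restrict_iff' measurableSet_Ioc]
  apply ae_of_all
  intro s hs
  have hknn : 0 ≤ (t - s) ^ (γ-1) / Real.Gamma γ :=
    div_nonneg (Real.rpow_nonneg (by linarith [hs.2]) _) hΓ.le
  show ‖((t - s) ^ (γ-1) / Real.Gamma γ) • g (mv (a s) (y s) + ℓ s)‖ ≤ _
  rw [norm_smul, Real.norm_eq_abs, abs_of_nonneg hknn]
  exact mul_le_mul_of_nonneg_left (hCg s (hsub hs)) hknn

lemma unif_conv {n : ℕ} {L : ℝ} (hL : 0 < L) {f : Vec n → Vec n} {feps : ℝ → Vec n → Vec n}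
    (hf : ∀ z₁ z₂ : Vec n, ‖f z₁ - f z₂‖ ≤ L * ‖z₁ - z₂‖)
    (hfepsLip : ∀ ε > (0:ℝ), ∀ z₁ z₂ : Vec n, ‖feps ε z₁ - feps ε z₂‖ ≤ L * ‖z₁ - z₂‖)
    (hfepsconv : ∀ z : Vec n, Tendsto (fun ε : ℝ => feps ε z) (𝓝[>] 0) (𝓝 (f z)))
    (R : ℝ) {η : ℝ} (hη : 0 < η) :
    ∀ᶠ ε in 𝓝[>] (0:ℝ), ∀ z ∈ Metric.closedBall (0 : Vec n) R, ‖feps ε z - f z‖ ≤ η := by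
  have htb := (isCompact_closedBall (0 : Vec n) R).totallyBounded
  have hr : 0 < η / (3 * L) := by positivity
  obtain ⟨net, hfin, hcov⟩ := Metric.totallyBounded_iff.1 htb _ hr
  have hev : ∀ᶠ ε in 𝓝[>] (0:ℝ), ∀ z ∈ net, feps ε z ∈ Metric.closedBall (f z) (η/3) := by
    rw [Set.Finite.eventually_all hfin]
    intro z _
    exact (hfepsconv z).eventually_mem (Metric.closedBall_mem_nhds _ (by positivity))
  filter_upwards [hev, self_mem_nhdsWithin] with ε hε hε0
  intro z hz
  obtain ⟨zk, hzk, hzzk⟩ := Set.mem_iUnion₂.1 (hcov hz)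
  have hd : ‖z - zk‖ < η / (3 * L) := by rwa [← dist_eq_norm]
  have h1 : ‖feps ε z - feps ε zk‖ ≤ L * ‖z - zk‖ := hfepsLip ε hε0 z zk
  have h2 : ‖feps ε zk - f zk‖ ≤ η / 3 := by
    have := hε zk hzk
    rwa [Metric.mem_closedBall, dist_eq_norm] at this
  have h3 : ‖f zk - f z‖ ≤ L * ‖zk - z‖ := hf zk z
  have hnz : ‖zk - z‖ = ‖z - zk‖ := norm_sub_rev _ _
  have hLd : L * ‖z - zk‖ ≤ η / 3 := by
    have hdle := hd.le
    calc L * ‖z - zk‖ ≤ L * (η / (3 * L)) := by gcongr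
      _ = η / 3 := by field_simp
  calc ‖feps ε z - f z‖
      = ‖(feps ε z - feps ε zk) + (feps ε zk - f zk) + (f zk - f z)‖ := by abel_nf
    _ ≤ ‖(feps ε z - feps ε zk) + (feps ε zk - f zk)‖ + ‖f zk - f z‖ := norm_add_le _ _
    _ ≤ ‖feps ε z - feps ε zk‖ + ‖feps ε zk - f zk‖ + ‖f zk - f z‖ := by
        gcongr; exact norm_add_le _ _
    _ ≤ η / 3 + η / 3 + η / 3 := by
        gcongr
        · exact h1.trans hLd
        · exact h3.trans (by rw [hnz]; exact hLd)
    _ = η := by ring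

lemma exists_lambda {γ T c : ℝ} (hγ : γ ∈ Ioo (0:ℝ) 1) (hT : 0 < T) (hc : 0 < c) :
    ∃ lam > (0:ℝ), ∀ t ∈ Icc (0:ℝ) T,
      c * ∫ u in (0:ℝ)..t, u ^ (γ - 1) * Real.exp (-(lam * u)) ≤ 1 / 2 := by
  obtain ⟨hγ0, hγ1⟩ := hγ
  have hr : -1 < γ - 1 := by linarith
  set h : ℝ := (γ / (4 * c)) ^ γ⁻¹ with hh_def
  have hh : 0 < h := Real.rpow_pos_of_pos (by positivity) _
  have hhγ : h ^ γ = γ / (4 * c) := Real.rpow_inv_rpow (by positivity) hγ0.ne'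
  have hhg1 : 0 < h ^ (γ - 1) := Real.rpow_pos_of_pos hh _
  have htend : Tendsto (fun l : ℝ => Real.exp (-(l * h))) atTop (𝓝 0) := by
    apply Real.tendsto_exp_atBot.comp
    exact tendsto_neg_atTop_atBot.comp (tendsto_id.atTop_mul_const hh)
  have hev : ∀ᶠ l : ℝ in atTop,
      Real.exp (-(l * h)) ≤ 1 / (4 * c * T * h ^ (γ - 1)) :=
    htend.eventually_le_const (by positivity)
  obtain ⟨lam, hlam1, hlam2⟩ := (hev.and (eventually_ge_atTop 1)).exists
  refine ⟨lam, by linarith, fun t ht => ?_⟩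
  have hint : ∀ b : ℝ, IntervalIntegrable (fun u => u ^ (γ - 1) * Real.exp (-(lam * u)))
      volume 0 b := fun b => exp_kernel_integrable hr
  have hbase : ∀ b : ℝ, 0 ≤ b → b ≤ h →
      (∫ u in (0:ℝ)..b, u ^ (γ - 1) * Real.exp (-(lam * u))) ≤ 1 / (4 * c) := by
    intro b hb0 hbh
    have h1 : (∫ u in (0:ℝ)..b, u ^ (γ - 1) * Real.exp (-(lam * u)))
        ≤ ∫ u in (0:ℝ)..b, u ^ (γ - 1) := by
      apply intervalIntegral.integral_mono_on hb0 (hint b) (intervalIntegrable_rpow' hr)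
      intro u hu
      calc u ^ (γ - 1) * Real.exp (-(lam * u)) ≤ u ^ (γ - 1) * 1 := by
            apply mul_le_mul_of_nonneg_left (Real.exp_le_one_iff.2 (by nlinarith [hu.1]))
              (Real.rpow_nonneg hu.1 _)
        _ = u ^ (γ - 1) := mul_one _
    have h2 : (∫ u in (0:ℝ)..b, u ^ (γ - 1)) = b ^ γ / γ := by
      rw [integral_rpow (Or.inl hr)]
      simp [Real.zero_rpow hγ0.ne', sub_add_cancel]
    rw [h2] at h1
    calc (∫ u in (0:ℝ)..b, u ^ (γ - 1) * Real.exp (-(lam * u))) ≤ b ^ γ / γ := h1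
      _ ≤ h ^ γ / γ := by
          have hbh2 : b ^ γ ≤ h ^ γ := Real.rpow_le_rpow hb0 hbh hγ0.le
          gcongr
      _ = 1 / (4 * c) := by rw [hhγ]; field_simp
  rcases le_or_gt t h with hth | hth
  · have := hbase t ht.1 hth
    calc c * ∫ u in (0:ℝ)..t, u ^ (γ - 1) * Real.exp (-(lam * u)) ≤ c * (1 / (4 * c)) := by
          exact mul_le_mul_of_nonneg_left this hc.le
      _ = 1 / 4 := by field_simp
      _ ≤ 1 / 2 := by norm_num
  · have hsub : IntervalIntegrable (fun u => u ^ (γ - 1) * Real.exp (-(lam * u)))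
        volume h t := (hint t).mono_set
      (by rw [uIcc_of_le (hh.le.trans hth.le), uIcc_of_le hth.le]
          exact Icc_subset_Icc hh.le le_rfl)
    have hsplit : (∫ u in (0:ℝ)..t, u ^ (γ - 1) * Real.exp (-(lam * u)))
        = (∫ u in (0:ℝ)..h, u ^ (γ - 1) * Real.exp (-(lam * u)))
          + ∫ u in h..t, u ^ (γ - 1) * Real.exp (-(lam * u)) :=
      (intervalIntegral.integral_add_adjacent_intervals (hint h) hsub).symm
    have htail : (∫ u in h..t, u ^ (γ - 1) * Real.exp (-(lam * u)))
        ≤ (t - h) * (h ^ (γ - 1) * Real.exp (-(lam * h))) := by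
      have hmono : (∫ u in h..t, u ^ (γ - 1) * Real.exp (-(lam * u)))
          ≤ ∫ _ in h..t, h ^ (γ - 1) * Real.exp (-(lam * h)) := by
        apply intervalIntegral.integral_mono_on hth.le hsub intervalIntegrable_const
        intro u hu
        have hu1 : h ≤ u := hu.1
        have h1 : u ^ (γ - 1) ≤ h ^ (γ - 1) :=
          Real.rpow_le_rpow_of_nonpos hh hu1 (by linarith)
        have h2 : Real.exp (-(lam * u)) ≤ Real.exp (-(lam * h)) := by
          apply Real.exp_le_exp.2; nlinarith
        exact mul_le_mul h1 h2 (Real.exp_pos _).le hhg1.le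
      calc _ ≤ _ := hmono
        _ = (t - h) * (h ^ (γ - 1) * Real.exp (-(lam * h))) := by
            simp [intervalIntegral.integral_const, smul_eq_mul]; ring_nf
    have hTb : t - h ≤ T := by have := ht.2; linarith
    have hKey : (t - h) * (h ^ (γ - 1) * Real.exp (-(lam * h))) ≤ 1 / (4 * c) := by
      have hEnonneg : 0 ≤ h ^ (γ - 1) * Real.exp (-(lam * h)) := by positivity
      calc (t - h) * (h ^ (γ - 1) * Real.exp (-(lam * h)))
          ≤ T * (h ^ (γ - 1) * (1 / (4 * c * T * h ^ (γ - 1)))) := by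
            apply mul_le_mul hTb (by gcongr) hEnonneg hT.le
        _ = 1 / (4 * c) := by field_simp
    have hhead := hbase h hh.le le_rfl
    rw [hsplit]
    calc c * ((∫ u in (0:ℝ)..h, u ^ (γ - 1) * Real.exp (-(lam * u)))
          + ∫ u in h..t, u ^ (γ - 1) * Real.exp (-(lam * u)))
        ≤ c * (1 / (4 * c) + 1 / (4 * c)) := by
          apply mul_le_mul_of_nonneg_left _ hc.le
          exact add_le_add hhead (htail.trans hKey)
      _ = 1 / 2 := by field_simp; ring

lemma gronwall {γ T c A lam : ℝ} (hγ : γ ∈ Ioo (0:ℝ) 1) (hT : 0 < T) (hc : 0 ≤ c)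
    (hA : 0 ≤ A) (hlam : 0 < lam)
    (hJ : ∀ t ∈ Icc (0:ℝ) T, c * ∫ u in (0:ℝ)..t, u ^ (γ-1) * Real.exp (-(lam*u)) ≤ 1/2)
    {w : ℝ → ℝ} (hw : ContinuousOn w (Icc 0 T)) (hw0 : ∀ t ∈ Icc (0:ℝ) T, 0 ≤ w t)
    (hineq : ∀ t ∈ Icc (0:ℝ) T, w t ≤ A + c * ∫ s in (0:ℝ)..t, (t-s) ^ (γ-1) * w s) :
    ∀ t ∈ Icc (0:ℝ) T, w t ≤ 2 * A * Real.exp (lam * T) := by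
  have hr : -1 < γ - 1 := by linarith [hγ.1]
  set g : ℝ → ℝ := fun t => Real.exp (-(lam * t)) * w t with hg_def
  have hgcont : ContinuousOn g (Icc 0 T) :=
    (Continuous.continuousOn (by continuity)).mul hw
  obtain ⟨t₀, ht₀mem, ht₀max⟩ :=
    isCompact_Icc.exists_isMaxOn (nonempty_Icc.2 hT.le) hgcont
  set M := g t₀ with hM_def
  have hgle : ∀ s ∈ Icc (0:ℝ) T, g s ≤ M := fun s hs => ht₀max hs
  have hM0 : 0 ≤ M := mul_nonneg (Real.exp_pos _).le (hw0 t₀ ht₀mem)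
  have hwg : ∀ s : ℝ, w s = Real.exp (lam * s) * g s := by
    intro s
    rw [hg_def]
    simp only [← mul_assoc, ← Real.exp_add]
    simp
  have hsub : Icc (0:ℝ) t₀ ⊆ Icc 0 T := Icc_subset_Icc le_rfl ht₀mem.2
  have hI1 : (∫ s in (0:ℝ)..t₀, (t₀ - s) ^ (γ-1) * w s)
      ≤ ∫ s in (0:ℝ)..t₀, (t₀ - s) ^ (γ-1) * (Real.exp (lam * s) * M) := by
    apply intervalIntegral.integral_mono_on ht₀mem.1
      (kernel_mul_contOn hr ht₀mem.1 (hw.mono hsub))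
      (kernel_mul_contOn hr ht₀mem.1
        (((Real.continuous_exp.comp (continuous_const.mul continuous_id)).mul
          continuous_const).continuousOn))
    intro s hs
    have hs' : s ∈ Icc (0:ℝ) T := hsub hs
    have hker : (0:ℝ) ≤ (t₀ - s) ^ (γ-1) := Real.rpow_nonneg (by linarith [hs.2]) _
    rw [hwg s]
    have : Real.exp (lam * s) * g s ≤ Real.exp (lam * s) * M :=
      mul_le_mul_of_nonneg_left (hgle s hs') (Real.exp_pos _).le
    exact mul_le_mul_of_nonneg_left this hker
  have hI2 : Real.exp (-(lam * t₀)) * (∫ s in (0:ℝ)..t₀, (t₀ - s) ^ (γ-1) * (Real.exp (lam * s) * M))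
      = M * ∫ u in (0:ℝ)..t₀, u ^ (γ-1) * Real.exp (-(lam * u)) := by
    rw [← intervalIntegral.integral_const_mul, ← intervalIntegral.integral_const_mul]
    rw [show (fun s => Real.exp (-(lam * t₀)) * ((t₀ - s) ^ (γ-1) * (Real.exp (lam * s) * M)))
        = (fun s => M * ((t₀ - s) ^ (γ-1) * Real.exp (-(lam * (t₀ - s))))) from ?_,
      intervalIntegral.integral_comp_sub_left
        (fun u => M * (u ^ (γ-1) * Real.exp (-(lam * u)))) t₀]
    · simp
    · funext s
      rw [show -(lam * (t₀ - s)) = -(lam * t₀) + lam * s by ring, Real.exp_add]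
      ring
  have hMle : M ≤ A + M * (1/2) := by
    have h1 : g t₀ ≤ Real.exp (-(lam * t₀)) * (A + c * ∫ s in (0:ℝ)..t₀, (t₀-s) ^ (γ-1) * w s) :=
      mul_le_mul_of_nonneg_left (hineq t₀ ht₀mem) (Real.exp_pos _).le
    have hexple : Real.exp (-(lam * t₀)) ≤ 1 := by
      rw [Real.exp_le_one_iff]
      have := ht₀mem.1
      nlinarith
    have h2 : Real.exp (-(lam * t₀)) * (A + c * ∫ s in (0:ℝ)..t₀, (t₀-s) ^ (γ-1) * w s)
        ≤ A + M * (1/2) := by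
      rw [mul_add]
      have hA' : Real.exp (-(lam * t₀)) * A ≤ A := mul_le_of_le_one_left hA hexple
      have hB' : Real.exp (-(lam * t₀)) * (c * ∫ s in (0:ℝ)..t₀, (t₀-s) ^ (γ-1) * w s)
          ≤ M * (1/2) := by
        have e1 : Real.exp (-(lam * t₀)) * (∫ s in (0:ℝ)..t₀, (t₀-s) ^ (γ-1) * w s)
            ≤ M * ∫ u in (0:ℝ)..t₀, u ^ (γ-1) * Real.exp (-(lam * u)) := by
          rw [← hI2]
          exact mul_le_mul_of_nonneg_left hI1 (Real.exp_pos _).le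
        calc Real.exp (-(lam * t₀)) * (c * ∫ s in (0:ℝ)..t₀, (t₀-s) ^ (γ-1) * w s)
            = c * (Real.exp (-(lam * t₀)) * ∫ s in (0:ℝ)..t₀, (t₀-s) ^ (γ-1) * w s) := by ring
          _ ≤ c * (M * ∫ u in (0:ℝ)..t₀, u ^ (γ-1) * Real.exp (-(lam * u))) :=
              mul_le_mul_of_nonneg_left e1 hc
          _ = M * (c * ∫ u in (0:ℝ)..t₀, u ^ (γ-1) * Real.exp (-(lam * u))) := by ring
          _ ≤ M * (1/2) := mul_le_mul_of_nonneg_left (hJ t₀ ht₀mem) hM0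
      exact add_le_add hA' hB'
    exact le_trans h1 h2
  have hM2A : M ≤ 2 * A := by linarith
  intro t ht
  calc w t = Real.exp (lam * t) * g t := hwg t
    _ ≤ Real.exp (lam * t) * M := mul_le_mul_of_nonneg_left (hgle t ht) (Real.exp_pos _).le
    _ ≤ Real.exp (lam * T) * (2 * A) := by
        apply mul_le_mul (Real.exp_le_exp.2 (by nlinarith [ht.2, hlam.le])) hM2A hM0
          (Real.exp_pos _).le
    _ = 2 * A * Real.exp (lam * T) := by ring

end Stmt18Aux

open Stmt18Aux

/-- Let `(f_ε)_{ε>0}` be a family of functions `ℝⁿ → ℝⁿ`, each globally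
Lipschitz with the same constant `L > 0`, converging pointwise to `f` as `ε ↓ 0`. If
`(a_ε,ℓ_ε) → (a,ℓ)` in `L^∞(0,T;ℝ^{n×n}×ℝⁿ)` (uniformly on `[0,T]`) as `ε ↓ 0`, and
`y_ε` solves the state equation with data `(f_ε, a_ε, ℓ_ε)` while `y = S(a,ℓ)`, then
`‖y_ε - y‖_{C([0,T];ℝⁿ)} → 0` as `ε ↓ 0`. -/
theorem stmt_18 {n : ℕ} (γ T L : ℝ) (hγ : γ ∈ Ioo (0:ℝ) 1) (hT : 0 < T) (hL : 0 < L)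
    (y₀ : Vec n) (f : Vec n → Vec n)
    (hf : ∀ z₁ z₂ : Vec n, ‖f z₁ - f z₂‖ ≤ L * ‖z₁ - z₂‖)
    (feps : ℝ → Vec n → Vec n)
    (hfepsLip : ∀ ε > (0:ℝ), ∀ z₁ z₂ : Vec n, ‖feps ε z₁ - feps ε z₂‖ ≤ L * ‖z₁ - z₂‖)
    (hfepsconv : ∀ z : Vec n, Tendsto (fun ε : ℝ => feps ε z) (𝓝[>] 0) (𝓝 (f z)))
    (a : ℝ → Mat n) (ℓ : ℝ → Vec n) (ha : Measurable a) (hℓ : Measurable ℓ)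
    (hbd : ∃ C : ℝ, ∀ t ∈ Icc (0:ℝ) T, ‖a t‖ ≤ C ∧ ‖ℓ t‖ ≤ C)
    (aeps : ℝ → ℝ → Mat n) (leps : ℝ → ℝ → Vec n)
    (haeps : ∀ ε > (0:ℝ), Measurable (aeps ε) ∧ Measurable (leps ε) ∧
      ∃ C : ℝ, ∀ t ∈ Icc (0:ℝ) T, ‖aeps ε t‖ ≤ C ∧ ‖leps ε t‖ ≤ C)
    (hconv : ∀ δ > (0:ℝ), ∃ ε₀ > (0:ℝ), ∀ ε ∈ Ioo (0:ℝ) ε₀, ∀ t ∈ Icc (0:ℝ) T,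
      ‖aeps ε t - a t‖ ≤ δ ∧ ‖leps ε t - ℓ t‖ ≤ δ)
    (Y : ℝ → ℝ → Vec n)
    (hY : ∀ ε > (0:ℝ), IsMildSolution γ T y₀ (feps ε) (aeps ε) (leps ε) (Y ε))
    (y : ℝ → Vec n) (hy : IsMildSolution γ T y₀ f a ℓ y) :
    ∀ δ > (0:ℝ), ∃ ε₀ > (0:ℝ), ∀ ε ∈ Ioo (0:ℝ) ε₀, ∀ t ∈ Icc (0:ℝ) T,
      ‖Y ε t - y t‖ ≤ δ := by
  intro δ hδ
  have hΓ : 0 < Real.Gamma γ := Real.Gamma_pos_of_pos hγ.1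
  have hr : -1 < γ - 1 := by linarith [hγ.1]
  obtain ⟨C₀, hC₀⟩ := hbd
  have hC₀0 : 0 ≤ C₀ := le_trans (norm_nonneg _) (hC₀ 0 ⟨le_rfl, hT.le⟩).1
  obtain ⟨hycont, hyeq⟩ := hy
  obtain ⟨Ky, hKy⟩ := isCompact_Icc.exists_bound_of_continuousOn hycont
  have hKy0 : 0 ≤ Ky := le_trans (norm_nonneg _) (hKy 0 ⟨le_rfl, hT.le⟩)
  set R := C₀ * Ky + C₀ with hRdef
  have hZR : ∀ s ∈ Icc (0:ℝ) T, ‖mv (a s) (y s) + ℓ s‖ ≤ R := by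
    intro s hs
    calc ‖mv (a s) (y s) + ℓ s‖ ≤ ‖mv (a s) (y s)‖ + ‖ℓ s‖ := norm_add_le _ _
      _ ≤ ‖a s‖ * ‖y s‖ + ‖ℓ s‖ := by gcongr; exact norm_mv_le _ _
      _ ≤ C₀ * Ky + C₀ := by
          apply add_le_add _ (hC₀ s hs).2
          exact mul_le_mul (hC₀ s hs).1 (hKy s hs) (norm_nonneg _) hC₀0
  set c := L * (C₀ + 1) / Real.Gamma γ with hcdef
  have hc : 0 < c := by positivity
  obtain ⟨lam, hlam, hJ⟩ := exists_lambda hγ hT hc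
  have hTγ : 0 < T ^ γ := Real.rpow_pos_of_pos hT γ
  set E := 2 * (T ^ γ / (γ * Real.Gamma γ)) * Real.exp (lam * T) with hEdef
  have hE0 : 0 < E :=
    mul_pos (mul_pos two_pos (div_pos hTγ (mul_pos hγ.1 hΓ))) (Real.exp_pos _)
  set η := δ / E with hηdef
  have hη0 : 0 < η := by positivity
  set d1 := min 1 (η / (2 * L * (Ky + 1))) with hd1def
  have hd10 : 0 < d1 := lt_min one_pos (by positivity)
  have hd11 : d1 ≤ 1 := min_le_left _ _
  have hd12 : L * d1 * (Ky + 1) ≤ η / 2 := by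
    have hmr : d1 ≤ η / (2 * L * (Ky + 1)) := min_le_right _ _
    calc L * d1 * (Ky + 1) ≤ L * (η / (2 * L * (Ky + 1))) * (Ky + 1) := by gcongr
      _ = η / 2 := by field_simp
  have hunif := unif_conv hL hf hfepsLip hfepsconv R (half_pos hη0)
  obtain ⟨ε₁, hε₁, hconv1⟩ := hconv d1 hd10
  have hconvev : ∀ᶠ ε in 𝓝[>] (0:ℝ), ∀ t ∈ Icc (0:ℝ) T,
      ‖aeps ε t - a t‖ ≤ d1 ∧ ‖leps ε t - ℓ t‖ ≤ d1 :=
    mem_of_superset (Ioo_mem_nhdsGT_of_mem ⟨le_rfl, hε₁⟩) (fun ε hε => hconv1 ε hε)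
  have key : ∀ᶠ ε in 𝓝[>] (0:ℝ), ∀ t ∈ Icc (0:ℝ) T, ‖Y ε t - y t‖ ≤ δ := by
    filter_upwards [hunif, hconvev, self_mem_nhdsWithin] with ε huε hcε hε0
    rw [mem_Ioi] at hε0
    obtain ⟨hYc, hYe⟩ := hY ε hε0
    obtain ⟨hamε, hlmε, _⟩ := haeps ε hε0
    set w := fun τ => ‖Y ε τ - y τ‖ with hwdef
    have hwcont : ContinuousOn w (Icc 0 T) := (hYc.sub hycont).norm
    have hLip := hfepsLip ε hε0
    have haepsb : ∀ s ∈ Icc (0:ℝ) T, ‖aeps ε s‖ ≤ C₀ + 1 := by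
      intro s hs
      calc ‖aeps ε s‖ = ‖(aeps ε s - a s) + a s‖ := by rw [sub_add_cancel]
        _ ≤ ‖aeps ε s - a s‖ + ‖a s‖ := norm_add_le _ _
        _ ≤ d1 + C₀ := add_le_add (hcε s hs).1 (hC₀ s hs).1
        _ ≤ C₀ + 1 := by linarith
    have hlepsb : ∀ s ∈ Icc (0:ℝ) T, ‖leps ε s‖ ≤ C₀ + 1 := by
      intro s hs
      calc ‖leps ε s‖ = ‖(leps ε s - ℓ s) + ℓ s‖ := by rw [sub_add_cancel]
        _ ≤ ‖leps ε s - ℓ s‖ + ‖ℓ s‖ := norm_add_le _ _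
        _ ≤ d1 + C₀ := add_le_add (hcε s hs).2 (hC₀ s hs).2
        _ ≤ C₀ + 1 := by linarith
    obtain ⟨KyY, hKyY⟩ := isCompact_Icc.exists_bound_of_continuousOn hYc
    -- composite bounds for integrands
    have hCf : ∀ s ∈ Icc (0:ℝ) T, ‖f (mv (a s) (y s) + ℓ s)‖ ≤ ‖f 0‖ + L * R := by
      intro s hs
      calc ‖f (mv (a s) (y s) + ℓ s)‖
          = ‖(f (mv (a s) (y s) + ℓ s) - f 0) + f 0‖ := by rw [sub_add_cancel]
        _ ≤ ‖f (mv (a s) (y s) + ℓ s) - f 0‖ + ‖f 0‖ := norm_add_le _ _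
        _ ≤ L * ‖(mv (a s) (y s) + ℓ s) - 0‖ + ‖f 0‖ := by gcongr; exact hf _ _
        _ ≤ L * R + ‖f 0‖ := by
            rw [sub_zero]
            gcongr
            exact hZR s hs
        _ = ‖f 0‖ + L * R := by ring
    have hCfε : ∀ s ∈ Icc (0:ℝ) T, ‖feps ε (mv (aeps ε s) (Y ε s) + leps ε s)‖
        ≤ ‖feps ε 0‖ + L * ((C₀ + 1) * KyY + (C₀ + 1)) := by
      intro s hs
      have hZb : ‖mv (aeps ε s) (Y ε s) + leps ε s‖ ≤ (C₀ + 1) * KyY + (C₀ + 1) := by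
        calc ‖mv (aeps ε s) (Y ε s) + leps ε s‖
            ≤ ‖mv (aeps ε s) (Y ε s)‖ + ‖leps ε s‖ := norm_add_le _ _
          _ ≤ ‖aeps ε s‖ * ‖Y ε s‖ + (C₀ + 1) := by
              gcongr
              · exact norm_mv_le _ _
              · exact hlepsb s hs
          _ ≤ (C₀ + 1) * KyY + (C₀ + 1) :=
              add_le_add (mul_le_mul (haepsb s hs) (hKyY s hs) (norm_nonneg _)
                (by linarith)) le_rfl
      calc ‖feps ε (mv (aeps ε s) (Y ε s) + leps ε s)‖
          = ‖(feps ε (mv (aeps ε s) (Y ε s) + leps ε s) - feps ε 0) + feps ε 0‖ := by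
            rw [sub_add_cancel]
        _ ≤ ‖feps ε (mv (aeps ε s) (Y ε s) + leps ε s) - feps ε 0‖ + ‖feps ε 0‖ :=
            norm_add_le _ _
        _ ≤ L * ‖(mv (aeps ε s) (Y ε s) + leps ε s) - 0‖ + ‖feps ε 0‖ := by
            gcongr; exact hLip _ _
        _ ≤ L * ((C₀ + 1) * KyY + (C₀ + 1)) + ‖feps ε 0‖ := by
            rw [sub_zero]; gcongr
        _ = ‖feps ε 0‖ + L * ((C₀ + 1) * KyY + (C₀ + 1)) := by ring
    -- the main integral inequality
    have hineq : ∀ t ∈ Icc (0:ℝ) T,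
        w t ≤ η * T ^ γ / (γ * Real.Gamma γ)
          + c * ∫ s in (0:ℝ)..t, (t - s) ^ (γ - 1) * w s := by
      intro t htm
      have hsubt : Icc (0:ℝ) t ⊆ Icc 0 T := Icc_subset_Icc le_rfl htm.2
      have hFint := integrand_integrable (t := t) hγ htm
        (lipschitz_continuous hL.le hf) ha hℓ hycont hCf
      have hFεint := integrand_integrable (t := t) hγ htm
        (lipschitz_continuous hL.le hLip) hamε hlmε hYc hCfε
      have hdiff : Y ε t - y t = ∫ s in (0:ℝ)..t,
          (((t - s) ^ (γ - 1) / Real.Gamma γ) • feps ε (mv (aeps ε s) (Y ε s) + leps ε s)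
          - ((t - s) ^ (γ - 1) / Real.Gamma γ) • f (mv (a s) (y s) + ℓ s)) := by
        rw [intervalIntegral.integral_sub hFεint hFint, hYe t htm, hyeq t htm]
        abel
      set G := fun s => (t - s) ^ (γ - 1) * ((L * (C₀ + 1) * w s + η) / Real.Gamma γ) with hGdef
      have hGcont : ContinuousOn (fun s => (L * (C₀ + 1) * w s + η) / Real.Gamma γ)
          (Icc 0 t) :=
        ((continuousOn_const.mul (hwcont.mono hsubt)).add continuousOn_const).div_const _
      have hGint : IntervalIntegrable G volume 0 t := kernel_mul_contOn hr htm.1 hGcont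
      have hnormle : w t ≤ |∫ s in (0:ℝ)..t, G s| := by
        rw [show w t = ‖Y ε t - y t‖ from rfl, hdiff]
        apply intervalIntegral.norm_integral_le_abs_of_norm_le _ hGint
        rw [uIoc_of_le htm.1, ae_restrict_iff' measurableSet_Ioc]
        apply ae_of_all
        intro s hs
        have hsT : s ∈ Icc (0:ℝ) T := ⟨hs.1.le, hs.2.trans htm.2⟩
        have hknn : (0:ℝ) ≤ (t - s) ^ (γ - 1) / Real.Gamma γ :=
          div_nonneg (Real.rpow_nonneg (by linarith [hs.2]) _) hΓ.le
        rw [← smul_sub, norm_smul, Real.norm_eq_abs, abs_of_nonneg hknn]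
        -- estimate the nonlinear difference
        have hZmem : mv (a s) (y s) + ℓ s ∈ Metric.closedBall (0 : Vec n) R :=
          mem_closedBall_zero_iff.2 (hZR s hsT)
        have h2 : ‖feps ε (mv (a s) (y s) + ℓ s) - f (mv (a s) (y s) + ℓ s)‖ ≤ η / 2 :=
          huε _ hZmem
        have hZd : ‖(mv (aeps ε s) (Y ε s) + leps ε s) - (mv (a s) (y s) + ℓ s)‖
            ≤ (C₀ + 1) * w s + d1 * (Ky + 1) := by
          have hre : (mv (aeps ε s) (Y ε s) + leps ε s) - (mv (a s) (y s) + ℓ s)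
              = (mv (aeps ε s) (Y ε s) - mv (a s) (y s)) + (leps ε s - ℓ s) := by abel
          rw [hre, mv_sub_sub]
          calc ‖(mv (aeps ε s) (Y ε s - y s) + mv (aeps ε s - a s) (y s)) + (leps ε s - ℓ s)‖
              ≤ ‖mv (aeps ε s) (Y ε s - y s)‖ + ‖mv (aeps ε s - a s) (y s)‖
                + ‖leps ε s - ℓ s‖ := by
                refine le_trans (norm_add_le _ _) ?_
                gcongr
                exact norm_add_le _ _
            _ ≤ ‖aeps ε s‖ * ‖Y ε s - y s‖ + ‖aeps ε s - a s‖ * ‖y s‖ + d1 := by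
                gcongr
                · exact norm_mv_le _ _
                · exact norm_mv_le _ _
                · exact (hcε s hsT).2
            _ ≤ (C₀ + 1) * w s + d1 * Ky + d1 := by
                have e1 : ‖aeps ε s‖ * ‖Y ε s - y s‖ ≤ (C₀ + 1) * w s :=
                  mul_le_mul_of_nonneg_right (haepsb s hsT) (norm_nonneg _)
                have e2 : ‖aeps ε s - a s‖ * ‖y s‖ ≤ d1 * Ky :=
                  mul_le_mul (hcε s hsT).1 (hKy s hsT) (norm_nonneg _) hd10.le
                linarith
            _ = (C₀ + 1) * w s + d1 * (Ky + 1) := by ring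
        have hN : ‖feps ε (mv (aeps ε s) (Y ε s) + leps ε s) - f (mv (a s) (y s) + ℓ s)‖
            ≤ L * (C₀ + 1) * w s + η := by
          calc ‖feps ε (mv (aeps ε s) (Y ε s) + leps ε s) - f (mv (a s) (y s) + ℓ s)‖
              = ‖(feps ε (mv (aeps ε s) (Y ε s) + leps ε s)
                  - feps ε (mv (a s) (y s) + ℓ s))
                + (feps ε (mv (a s) (y s) + ℓ s) - f (mv (a s) (y s) + ℓ s))‖ := by abel_nf
            _ ≤ ‖feps ε (mv (aeps ε s) (Y ε s) + leps ε s)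
                  - feps ε (mv (a s) (y s) + ℓ s)‖
                + ‖feps ε (mv (a s) (y s) + ℓ s) - f (mv (a s) (y s) + ℓ s)‖ :=
                norm_add_le _ _
            _ ≤ L * ((C₀ + 1) * w s + d1 * (Ky + 1)) + η / 2 := by
                gcongr
                exact le_trans (hLip _ _) (by gcongr)
            _ = L * (C₀ + 1) * w s + (L * d1 * (Ky + 1) + η / 2) := by ring
            _ ≤ L * (C₀ + 1) * w s + η := by
                have : L * d1 * (Ky + 1) + η / 2 ≤ η := by linarith
                linarith
        calc ((t - s) ^ (γ - 1) / Real.Gamma γ)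
              * ‖feps ε (mv (aeps ε s) (Y ε s) + leps ε s) - f (mv (a s) (y s) + ℓ s)‖
            ≤ ((t - s) ^ (γ - 1) / Real.Gamma γ) * (L * (C₀ + 1) * w s + η) :=
              mul_le_mul_of_nonneg_left hN hknn
          _ = G s := by rw [hGdef]; ring
      -- evaluate the right-hand side
      have hGnn : 0 ≤ ∫ s in (0:ℝ)..t, G s := by
        apply intervalIntegral.integral_nonneg htm.1
        intro s hs
        have : (0:ℝ) ≤ (t - s) ^ (γ - 1) := Real.rpow_nonneg (by linarith [hs.2]) _
        have hwnn : (0:ℝ) ≤ w s := norm_nonneg _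
        apply mul_nonneg this
        apply div_nonneg _ hΓ.le
        positivity
      rw [abs_of_nonneg hGnn] at hnormle
      have hsplit : (∫ s in (0:ℝ)..t, G s)
          = c * (∫ s in (0:ℝ)..t, (t - s) ^ (γ - 1) * w s)
            + (η / Real.Gamma γ) * ∫ s in (0:ℝ)..t, (t - s) ^ (γ - 1) := by
        rw [← intervalIntegral.integral_const_mul, ← intervalIntegral.integral_const_mul,
          ← intervalIntegral.integral_add
            ((kernel_mul_contOn hr htm.1 (hwcont.mono hsubt)).const_mul c)
            ((kernelII hr t).const_mul (η / Real.Gamma γ))]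
        congr 1
        funext s
        rw [hGdef, hcdef]
        ring
      have hker_eval : (∫ s in (0:ℝ)..t, (t - s) ^ (γ - 1)) = t ^ γ / γ := by
        rw [kernel_integral hr htm.1]
        norm_num
      have hlast : (η / Real.Gamma γ) * (t ^ γ / γ) ≤ η * T ^ γ / (γ * Real.Gamma γ) := by
        have htγ : t ^ γ ≤ T ^ γ := Real.rpow_le_rpow htm.1 htm.2 hγ.1.le
        have h0 : 0 < γ * Real.Gamma γ := mul_pos hγ.1 hΓ
        calc (η / Real.Gamma γ) * (t ^ γ / γ) = η * t ^ γ / (γ * Real.Gamma γ) := by ring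
          _ ≤ η * T ^ γ / (γ * Real.Gamma γ) :=
              (div_le_div_iff_of_pos_right h0).2 (mul_le_mul_of_nonneg_left htγ hη0.le)
      calc w t ≤ ∫ s in (0:ℝ)..t, G s := hnormle
        _ = c * (∫ s in (0:ℝ)..t, (t - s) ^ (γ - 1) * w s)
            + (η / Real.Gamma γ) * ∫ s in (0:ℝ)..t, (t - s) ^ (γ - 1) := hsplit
        _ ≤ c * (∫ s in (0:ℝ)..t, (t - s) ^ (γ - 1) * w s)
            + η * T ^ γ / (γ * Real.Gamma γ) := by
            rw [hker_eval]
            exact add_le_add_right hlast _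
        _ = η * T ^ γ / (γ * Real.Gamma γ)
            + c * ∫ s in (0:ℝ)..t, (t - s) ^ (γ - 1) * w s := by ring
    have hgron := gronwall hγ hT hc.le
      (A := η * T ^ γ / (γ * Real.Gamma γ))
      (div_nonneg (mul_nonneg hη0.le hTγ.le) (mul_pos hγ.1 hΓ).le) hlam hJ hwcont
      (fun t _ => norm_nonneg _) hineq
    intro t htm
    calc ‖Y ε t - y t‖ = w t := rfl
      _ ≤ 2 * (η * T ^ γ / (γ * Real.Gamma γ)) * Real.exp (lam * T) := hgron t htm
      _ = η * E := by rw [hEdef]; ring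
      _ = δ := by rw [hηdef]; field_simp
  obtain ⟨u, hu, hsubu⟩ := mem_nhdsGT_iff_exists_Ioo_subset.1 key
  exact ⟨u, hu, fun ε hε t ht => hsubu hε t ht⟩
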